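/- arXiv:1906.08159 — 7 statements merged into one kernel-verified Lean document; each statement's English description precedes it below -/
import Mathlib

section
/- Let H be a complex separable Hilbert space with Hilbert basis (v_k)_{k∈ℕ}, let λ : ℕ → ℝ satisfy λ_k ≥ 1 for all k, let T > 0, and let r ∈ ℂ with Re r ≠ 0. Let μ ∈ H with coefficients γ_k := ⟨v_k, μ⟩ satisfy Σ_k λ_k³ |γ_k|² < ∞. Define ξ_k := (r − i λ_k) γ_k / (e^{(r − i λ_k)T} − 1) and u(t) := Σ_k e^{−i λ_k t} ξ_k v_k. Then Σ_k λ_k |⟨v_k, u(t)⟩|² < ∞ for every t ∈ [0,T], and there is a constant c > 0 depending only on r and T such that sup_{t∈[0,T]} Σ_k λ_k |⟨v_k, u(t)⟩|² ≤ c · Σ_k λ_k³ |γ_k|². -/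
/-- regularity estimate.  With `λ_k ≥ 1`, `T > 0`, `Re r ≠ 0`,
`γ_k = ⟨v_k, μ⟩` satisfying `Σ λ_k³ |γ_k|² < ∞`,
`ξ_k = (r - iλ_k) γ_k / (e^{(r - iλ_k)T} - 1)` and `u(t) = Σ_k e^{-iλ_k t} ξ_k v_k`,
one has `Σ_k λ_k |⟨v_k, u(t)⟩|² < ∞` for `t ∈ [0,T]`, with a bound
`sup_t Σ_k λ_k |⟨v_k, u(t)⟩|² ≤ c Σ_k λ_k³ |γ_k|²` where `c` depends only on `r, T`. -/
theorem stmt_1 {H : Type*} [NormedAddCommGroup H] [InnerProductSpace ℂ H] [CompleteSpace H]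
    (b : HilbertBasis ℕ ℂ H) (T : ℝ) (hT : 0 < T) (r : ℂ) (hr : r.re ≠ 0) :
    ∃ c > 0, ∀ (lam : ℕ → ℝ), (∀ k, 1 ≤ lam k) →
      ∀ (μ : H) (u : ℝ → H),
        Summable (fun k => lam k ^ 3 * ‖b.repr μ k‖ ^ 2) →
        (∀ t : ℝ, HasSum (fun k =>
          (Complex.exp (-(Complex.I * lam k * t)) *
            ((r - Complex.I * lam k) * b.repr μ k /
              (Complex.exp ((r - Complex.I * lam k) * T) - 1))) • b k) (u t)) →
        ∀ t ∈ Set.Icc (0:ℝ) T,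
          Summable (fun k => lam k * ‖b.repr (u t) k‖ ^ 2) ∧
          ∑' k, lam k * ‖b.repr (u t) k‖ ^ 2 ≤ c * ∑' k, lam k ^ 3 * ‖b.repr μ k‖ ^ 2 := by
  set δ := |Real.exp (r.re * T) - 1| with hδdef
  have hδ : 0 < δ := by
    rw [hδdef, abs_pos, sub_ne_zero]
    intro h
    have h0 : r.re * T = 0 := Real.exp_injective (h.trans Real.exp_zero.symm)
    rcases mul_eq_zero.mp h0 with h1 | h1
    · exact hr h1
    · exact hT.ne' h1
  refine ⟨(‖r‖ + 1) ^ 2 / δ ^ 2, by positivity, ?_⟩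
  intro lam hlam μ u hsum hu t ht
  set a : ℕ → ℂ := fun k => Complex.exp (-(Complex.I * lam k * t)) *
      ((r - Complex.I * lam k) * b.repr μ k /
        (Complex.exp ((r - Complex.I * lam k) * T) - 1)) with ha
  have hcoef : ∀ k, b.repr (u t) k = a k := by
    intro k
    rw [b.repr_apply_apply]
    have h1 : HasSum (fun j => (inner ℂ (b k) (a j • b j) : ℂ)) (inner ℂ (b k) (u t)) :=
      (innerSL ℂ (b k)).hasSum (hu t)
    have h2 : (fun j => (inner ℂ (b k) (a j • b j) : ℂ)) = fun j => if j = k then a k else 0 := by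
      funext j
      rw [inner_smul_right, orthonormal_iff_ite.mp b.orthonormal]
      rcases eq_or_ne j k with rfl | hjk
      · simp
      · simp [hjk, Ne.symm hjk]
    rw [h2] at h1
    exact h1.unique (hasSum_ite_eq k (a k))
  have hlam0 : ∀ k, (0:ℝ) ≤ lam k := fun k => le_trans zero_le_one (hlam k)
  have key : ∀ k, lam k * ‖a k‖ ^ 2 ≤
      ((‖r‖ + 1) ^ 2 / δ ^ 2) * (lam k ^ 3 * ‖b.repr μ k‖ ^ 2) := by
    intro k
    have hden : δ ≤ ‖Complex.exp ((r - Complex.I * lam k) * T) - 1‖ := by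
      have h1 : ‖Complex.exp ((r - Complex.I * lam k) * T)‖ = Real.exp (r.re * T) := by
        rw [Complex.norm_exp]
        congr 1
        simp [Complex.mul_re, Complex.sub_re, Complex.sub_im]
      calc δ = |‖Complex.exp ((r - Complex.I * lam k) * T)‖ - ‖(1:ℂ)‖| := by
              rw [h1]; simp [hδdef]
        _ ≤ ‖Complex.exp ((r - Complex.I * lam k) * T) - 1‖ := abs_norm_sub_norm_le _ _
    have hnum : ‖r - Complex.I * lam k‖ ≤ (‖r‖ + 1) * lam k := by
      calc ‖r - Complex.I * lam k‖ ≤ ‖r‖ + ‖Complex.I * (lam k : ℂ)‖ := norm_sub_le _ _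
        _ = ‖r‖ + |lam k| := by simp
        _ = ‖r‖ + lam k := by rw [abs_of_nonneg (hlam0 k)]
        _ ≤ ‖r‖ * lam k + 1 * lam k := by
            have := hlam k
            have h2 : ‖r‖ ≤ ‖r‖ * lam k := le_mul_of_one_le_right (norm_nonneg _) this
            linarith
        _ = (‖r‖ + 1) * lam k := by ring
    have hak : ‖a k‖ ≤ (‖r‖ + 1) * lam k * ‖b.repr μ k‖ / δ := by
      rw [ha]
      simp only [norm_mul, norm_div]
      have hexp1 : ‖Complex.exp (-(Complex.I * lam k * t))‖ = 1 := by
        rw [Complex.norm_exp]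
        have : (-(Complex.I * lam k * t)).re = 0 := by
          simp [Complex.mul_re, Complex.mul_im]
        rw [this, Real.exp_zero]
      rw [hexp1, one_mul]
      apply div_le_div₀ (mul_nonneg (mul_nonneg (by positivity) (hlam0 k)) (norm_nonneg _)) _ hδ hden
      exact mul_le_mul_of_nonneg_right hnum (norm_nonneg _)
    have h3 : ‖a k‖ ^ 2 ≤ ((‖r‖ + 1) * lam k * ‖b.repr μ k‖ / δ) ^ 2 :=
      pow_le_pow_left₀ (norm_nonneg _) hak 2
    calc lam k * ‖a k‖ ^ 2 ≤ lam k * ((‖r‖ + 1) * lam k * ‖b.repr μ k‖ / δ) ^ 2 :=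
          mul_le_mul_of_nonneg_left h3 (hlam0 k)
      _ = ((‖r‖ + 1) ^ 2 / δ ^ 2) * (lam k ^ 3 * ‖b.repr μ k‖ ^ 2) := by
          field_simp
  have hsum2 : Summable (fun k => lam k * ‖b.repr (u t) k‖ ^ 2) := by
    apply Summable.of_nonneg_of_le (fun k => mul_nonneg (hlam0 k) (by positivity))
      (fun k => by rw [hcoef k]; exact key k) (hsum.mul_left _)
  refine ⟨hsum2, ?_⟩
  calc ∑' k, lam k * ‖b.repr (u t) k‖ ^ 2
      ≤ ∑' k, ((‖r‖ + 1) ^ 2 / δ ^ 2) * (lam k ^ 3 * ‖b.repr μ k‖ ^ 2) :=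
        Summable.tsum_le_tsum (fun k => by rw [hcoef k]; exact key k) hsum2 (hsum.mul_left _)
    _ = ((‖r‖ + 1) ^ 2 / δ ^ 2) * ∑' k, lam k ^ 3 * ‖b.repr μ k‖ ^ 2 := tsum_mul_left
end

section
/- Let H be a complex separable Hilbert space with Hilbert basis (v_k)_{k∈ℕ}, let λ : ℕ → ℝ, let T > 0, and let r ∈ ℂ with Re r ≠ 0. Suppose u, ũ : [0,T] → H are continuous functions such that for every k ∈ ℕ and t ∈ [0,T], ⟨v_k, u(t)⟩ = e^{−i λ_k t} ⟨v_k, u(0)⟩ and ⟨v_k, ũ(t)⟩ = e^{−i λ_k t} ⟨v_k, ũ(0)⟩, and suppose ∫₀ᵀ e^{r t} u(t) dt = ∫₀ᵀ e^{r t} ũ(t) dt (Bochner integrals in H). Then u(t) = ũ(t) for all t ∈ [0,T]. -/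
/-- uniqueness in Theorem 1.  Two continuous solutions of the Schrödinger
equation (in the diagonal form `⟨v_k, u(t)⟩ = e^{-iλ_k t} ⟨v_k, u(0)⟩`) having the same
weighted time-average `∫₀ᵀ e^{rt} u(t) dt` coincide on `[0, T]`, provided `Re r ≠ 0`. -/
theorem stmt_2 {H : Type*} [NormedAddCommGroup H] [InnerProductSpace ℂ H] [CompleteSpace H]
    (b : HilbertBasis ℕ ℂ H) (lam : ℕ → ℝ) (T : ℝ) (hT : 0 < T)
    (r : ℂ) (hr : r.re ≠ 0) (u v : ℝ → H)
    (hucont : ContinuousOn u (Set.Icc 0 T)) (hvcont : ContinuousOn v (Set.Icc 0 T))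
    (hu : ∀ k, ∀ t ∈ Set.Icc (0:ℝ) T,
      b.repr (u t) k = Complex.exp (-(Complex.I * lam k * t)) * b.repr (u 0) k)
    (hv : ∀ k, ∀ t ∈ Set.Icc (0:ℝ) T,
      b.repr (v t) k = Complex.exp (-(Complex.I * lam k * t)) * b.repr (v 0) k)
    (hint : (∫ t in (0:ℝ)..T, Complex.exp (r * t) • u t) =
      ∫ t in (0:ℝ)..T, Complex.exp (r * t) • v t) :
    ∀ t ∈ Set.Icc (0:ℝ) T, u t = v t := by
  have hT' : (0:ℝ) ≤ T := hT.le
  have huIcc : Set.uIcc (0:ℝ) T = Set.Icc 0 T := Set.uIcc_of_le hT'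
  -- key computation for one coordinate
  have key : ∀ (k : ℕ) (w : ℝ → H), ContinuousOn w (Set.Icc 0 T) →
      (∀ t ∈ Set.Icc (0:ℝ) T,
        b.repr (w t) k = Complex.exp (-(Complex.I * lam k * t)) * b.repr (w 0) k) →
      (innerSL ℂ (b k)) (∫ t in (0:ℝ)..T, Complex.exp (r * t) • w t) =
        ((Complex.exp ((r - Complex.I * lam k) * T) - 1) / (r - Complex.I * lam k)) *
          b.repr (w 0) k := by
    intro k w hwcont hw
    set s : ℂ := r - Complex.I * lam k with hs
    have hsre : s.re = r.re := by simp [hs]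
    have hs0 : s ≠ 0 := by
      intro h
      apply hr
      rw [← hsre, h, Complex.zero_re]
    have hcexp : ContinuousOn (fun t : ℝ => Complex.exp (r * t)) (Set.uIcc 0 T) :=
      (Complex.continuous_exp.comp (continuous_const.mul Complex.continuous_ofReal)).continuousOn
    have hInt : IntervalIntegrable (fun t => Complex.exp (r * t) • w t) MeasureTheory.volume 0 T :=
      (hcexp.smul (huIcc ▸ hwcont)).intervalIntegrable
    rw [← ContinuousLinearMap.intervalIntegral_comp_comm (innerSL ℂ (b k)) hInt]
    have hcongr : ∀ t ∈ Set.uIcc (0:ℝ) T,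
        (innerSL ℂ (b k)) (Complex.exp (r * t) • w t) =
          Complex.exp (s * t) * b.repr (w 0) k := by
      intro t ht
      rw [huIcc] at ht
      have : (innerSL ℂ (b k)) (w t) = b.repr (w t) k := (b.repr_apply_apply (w t) k).symm
      rw [map_smul, smul_eq_mul, this, hw t ht, ← mul_assoc, ← Complex.exp_add]
      congr 2
      ring
    rw [intervalIntegral.integral_congr hcongr, intervalIntegral.integral_mul_const,
      integral_exp_mul_complex hs0]
    simp
  have huv0 : ∀ k, b.repr (u 0) k = b.repr (v 0) k := by
    intro k
    set s : ℂ := r - Complex.I * lam k with hs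
    have hsre : s.re = r.re := by simp [hs]
    have hs0 : s ≠ 0 := by
      intro h; apply hr; rw [← hsre, h, Complex.zero_re]
    have hE : (Complex.exp (s * T) - 1) / s ≠ 0 := by
      apply div_ne_zero _ hs0
      rw [sub_ne_zero]
      intro h
      have : ‖Complex.exp (s * T)‖ = 1 := by rw [h]; simp
      rw [Complex.norm_exp] at this
      have h2 : ((s * T : ℂ)).re = 0 := by simpa using this
      have : s.re * T = 0 := by
        simpa [Complex.mul_re] using h2
      rcases mul_eq_zero.mp this with h3 | h3
      · exact hr (hsre ▸ h3)
      · exact hT.ne' h3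
    have h1 := key k u hucont (hu k)
    have h2 := key k v hvcont (hv k)
    rw [hint] at h1
    have := h1.symm.trans h2
    exact mul_left_cancel₀ hE this
  -- coefficients agree at all times
  intro t ht
  apply b.repr.injective
  apply (lp.ext_iff (f := b.repr (u t)) (g := b.repr (v t))).mpr
  funext k
  rw [hu k t ht, hv k t ht, huv0 k]
end

section
/- Let H be a complex separable Hilbert space with Hilbert basis (v_k)_{k∈ℕ}, let λ : ℕ → ℝ, let T > 0, and let r ∈ ℂ with Re r ≠ 0. Let ξ ∈ H with coefficients ξ_k := ⟨v_k, ξ⟩, and define u(t) := Σ_k e^{−i λ_k t} ξ_k v_k. Then the Bochner integral ∫₀ᵀ e^{r t} u(t) dt exists in H and equals Σ_k ζ_k ξ_k v_k, where ζ_k := (e^{(r − i λ_k)T} − 1)/(r − i λ_k). -/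
open MeasureTheory Complex

local notation "⟪" x ", " y "⟫" => @inner ℂ _ _ x y

/-- the weighted time-average of the Schrödinger evolution
`u(t) = Σ_k e^{-iλ_k t} ξ_k v_k` exists as a Bochner integral and equals
`Σ_k ζ_k ξ_k v_k` with `ζ_k = (e^{(r - iλ_k)T} - 1)/(r - iλ_k)`. -/
theorem stmt_5 {H : Type*} [NormedAddCommGroup H] [InnerProductSpace ℂ H] [CompleteSpace H]
    (b : HilbertBasis ℕ ℂ H) (lam : ℕ → ℝ) (T : ℝ) (hT : 0 < T)
    (r : ℂ) (hr : r.re ≠ 0) (ξ : H) (u : ℝ → H)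
    (hu : ∀ t : ℝ,
      HasSum (fun k => (Complex.exp (-(Complex.I * lam k * t)) * b.repr ξ k) • b k) (u t)) :
    IntervalIntegrable (fun t : ℝ => Complex.exp (r * t) • u t) volume 0 T ∧
    HasSum
      (fun k =>
        (((Complex.exp ((r - Complex.I * lam k) * T) - 1) / (r - Complex.I * lam k)) *
          b.repr ξ k) • b k)
      (∫ t in (0:ℝ)..T, Complex.exp (r * t) • u t) := by
  set c : ℕ → ℝ → ℂ := fun k t => Complex.exp (-(Complex.I * lam k * t)) * b.repr ξ k with hc
  have hcoef : ∀ t k, ⟪b k, u t⟫ = c k t := by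
    intro t k
    have h1 : HasSum (fun j => ⟪b k, (c j t) • b j⟫) ⟪b k, u t⟫ :=
      (hu t).mapL (innerSL ℂ (b k))
    have h2 : (fun j => ⟪b k, (c j t) • b j⟫) = fun j => if j = k then c k t else 0 := by
      funext j
      rw [inner_smul_right, orthonormal_iff_ite.mp b.orthonormal k j]
      by_cases h : j = k
      · subst h; simp
      · simp [h, Ne.symm h]
    rw [h2] at h1
    exact h1.unique (hasSum_ite_eq k (c k t))
  have hnorm : ∀ t, ‖u t‖ = ‖ξ‖ := by
    intro t
    have h1 : ⟪u t, u t⟫ = ⟪ξ, ξ⟫ := by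
      rw [← b.tsum_inner_mul_inner (u t) (u t), ← b.tsum_inner_mul_inner ξ ξ]
      congr 1
      funext i
      have e1 : ⟪b i, u t⟫ = c i t := hcoef t i
      have e2 : ⟪b i, ξ⟫ = b.repr ξ i := (b.repr_apply_apply ξ i).symm
      have e3 : ⟪u t, b i⟫ = (starRingEnd ℂ) (c i t) := by
        rw [← e1]; exact (inner_conj_symm _ _).symm
      have e4 : ⟪ξ, b i⟫ = (starRingEnd ℂ) (b.repr ξ i) := by
        rw [← e2]; exact (inner_conj_symm _ _).symm
      rw [e1, e2, e3, e4, hc]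
      simp only [map_mul, ← Complex.exp_conj]
      have h5 : (starRingEnd ℂ) (-(Complex.I * lam i * t)) = Complex.I * lam i * t := by
        simp
      rw [h5, mul_mul_mul_comm, ← Complex.exp_add]
      simp
    rw [inner_self_eq_norm_sq_to_K, inner_self_eq_norm_sq_to_K] at h1
    have h2 : ‖u t‖^2 = ‖ξ‖^2 := by exact_mod_cast h1
    nlinarith [norm_nonneg (u t), norm_nonneg ξ]
  have hmeas : StronglyMeasurable u := by
    apply stronglyMeasurable_of_tendsto (f := fun n t => ∑ k ∈ Finset.range n, c k t • b k)
      (Filter.atTop)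
    · intro n
      apply Continuous.stronglyMeasurable
      apply continuous_finset_sum
      intro k _
      exact ((Complex.continuous_exp.comp (by continuity)).mul continuous_const).smul
        continuous_const
    · rw [tendsto_pi_nhds]
      intro t
      exact (hu t).tendsto_sum_nat
  have hmeasf : StronglyMeasurable (fun t : ℝ => Complex.exp (r * t) • u t) :=
    ((Complex.continuous_exp.comp (by continuity)).stronglyMeasurable).smul hmeas
  have hint : IntegrableOn (fun t : ℝ => Complex.exp (r * t) • u t) (Set.Ioc 0 T) volume := by
    apply Integrable.mono' (g := fun _ : ℝ => Real.exp (|r.re| * T) * ‖ξ‖)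
      (integrable_const _) hmeasf.aestronglyMeasurable
    filter_upwards [ae_restrict_mem measurableSet_Ioc] with t ht
    have hb : ‖Complex.exp (r * t)‖ ≤ Real.exp (|r.re| * T) := by
      rw [Complex.norm_exp]
      apply Real.exp_le_exp.mpr
      have h5 : (r * (t : ℂ)).re = r.re * t := by simp
      rw [h5]
      calc r.re * t ≤ |r.re * t| := le_abs_self _
        _ = |r.re| * |t| := abs_mul _ _
        _ ≤ |r.re| * T := by
            apply mul_le_mul_of_nonneg_left _ (abs_nonneg _)
            rw [_root_.abs_of_nonneg ht.1.le]; exact ht.2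
    rw [norm_smul, hnorm t]
    exact mul_le_mul_of_nonneg_right hb (norm_nonneg ξ)
  have hII : IntervalIntegrable (fun t : ℝ => Complex.exp (r * t) • u t) volume 0 T := by
    rw [intervalIntegrable_iff, Set.uIoc_of_le hT.le]
    exact hint
  refine ⟨hII, ?_⟩
  set I0 := ∫ t in (0:ℝ)..T, Complex.exp (r * t) • u t with hI0
  have hrepr : ∀ k, b.repr I0 k =
      ((Complex.exp ((r - Complex.I * lam k) * T) - 1) / (r - Complex.I * lam k)) * b.repr ξ k := by
    intro k
    have hIoc : I0 = ∫ t in Set.Ioc 0 T, Complex.exp (r * t) • u t := by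
      rw [hI0, intervalIntegral.integral_of_le hT.le]
    have h1 : b.repr I0 k = ∫ t in Set.Ioc 0 T, ⟪b k, Complex.exp (r * t) • u t⟫ := by
      rw [b.repr_apply_apply, hIoc, integral_inner hint]
    rw [h1]
    have h2 : (fun t : ℝ => ⟪b k, Complex.exp (r * t) • u t⟫) =
        fun t : ℝ => Complex.exp ((r - Complex.I * lam k) * t) * b.repr ξ k := by
      funext t
      rw [inner_smul_right, hcoef t k, hc]
      simp only []
      rw [← mul_assoc, ← Complex.exp_add]
      congr 2
      push_cast
      ring
    rw [h2]
    have hne : (r - Complex.I * lam k) ≠ 0 := by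
      intro h
      apply hr
      have := congrArg Complex.re h
      simpa using this
    rw [MeasureTheory.integral_mul_const, ← intervalIntegral.integral_of_le hT.le,
      _root_.integral_exp_mul_complex hne]
    norm_num
  have hfinal := b.hasSum_repr I0
  convert hfinal using 2 with k
  rw [hrepr k]
end

section
/- Let λ : ℕ → ℝ satisfy λ_k ≥ 1 for all k, let T > 0, and let r ∈ ℂ with Re r ≠ 0. Then there exists a constant ĉ > 0 depending only on r and T such that for every complex sequence (ξ_k)_{k∈ℕ} with Σ_k λ_k |ξ_k|² < ∞, one has Σ_k λ_k² |ζ_k ξ_k|² ≤ ĉ · Σ_k λ_k |ξ_k|², where ζ_k := (e^{(r − i λ_k)T} − 1)/(r − i λ_k). In particular the averaging operator M₀ mapping the initial state ξ = Σ_k ξ_k v_k to μ = Σ_k ζ_k ξ_k v_k = ∫₀ᵀ e^{rt} u(t) dt is continuous from H¹ to H². -/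
/-- Pointwise bound: `λ² ‖ζ‖² ≤ c λ` for `λ ≥ 1`. -/
lemma stmt8_pointwise (T : ℝ) (r : ℂ) (hr : r.re ≠ 0) (l : ℝ) (hl : 1 ≤ l) :
    l ^ 2 * ‖(Complex.exp ((r - Complex.I * l) * T) - 1) / (r - Complex.I * l)‖ ^ 2 ≤
      ((Real.exp (r.re * T) + 1) ^ 2 * (1 / (2 * |r.re|) + |r.im| / r.re ^ 2)) * l := by
  set a := r.re
  set b := r.im
  have ha : 0 < |a| := abs_pos.mpr hr
  have hE : (0:ℝ) < Real.exp (a * T) + 1 := by positivity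
  have hden : ‖r - Complex.I * l‖ ^ 2 = a ^ 2 + (l - b) ^ 2 := by
    rw [Complex.sq_norm, Complex.normSq_apply]
    simp [Complex.sub_re, Complex.sub_im, Complex.mul_re, Complex.mul_im]
    ring
  have hdpos : (0:ℝ) < a ^ 2 + (l - b) ^ 2 := by positivity
  have hnum : ‖Complex.exp ((r - Complex.I * l) * T) - 1‖ ≤ Real.exp (a * T) + 1 := by
    calc ‖Complex.exp ((r - Complex.I * l) * T) - 1‖
        ≤ ‖Complex.exp ((r - Complex.I * l) * T)‖ + ‖(1:ℂ)‖ := norm_sub_le _ _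
      _ = Real.exp (((r - Complex.I * l) * T).re) + 1 := by
          rw [Complex.norm_exp, norm_one]
      _ = Real.exp (a * T) + 1 := by
          congr 2
          simp [a, Complex.mul_re, Complex.sub_re, Complex.sub_im, Complex.mul_im]
  have hnum' : ‖Complex.exp ((r - Complex.I * l) * T) - 1‖ ^ 2 ≤ (Real.exp (a * T) + 1) ^ 2 :=
    pow_le_pow_left₀ (norm_nonneg _) hnum 2
  have hK : l ≤ (1 / (2 * |a|) + |b| / a ^ 2) * (a ^ 2 + (l - b) ^ 2) := by
    have h1 : 2 * |a| * |l - b| ≤ a ^ 2 + (l - b) ^ 2 := by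
      nlinarith [sq_nonneg (|a| - |l - b|), sq_abs a, sq_abs (l - b)]
    have h2 : l - b ≤ |l - b| := le_abs_self _
    have h3 : b ≤ |b| := le_abs_self _
    have ha2 : (0:ℝ) < a ^ 2 := by positivity
    have e1 : |l - b| ≤ (a ^ 2 + (l - b) ^ 2) / (2 * |a|) := by
      rw [le_div_iff₀ (by positivity)]; linarith
    have e2 : |b| ≤ |b| * (a ^ 2 + (l - b) ^ 2) / a ^ 2 := by
      rw [le_div_iff₀ ha2]
      exact mul_le_mul_of_nonneg_left (by nlinarith [sq_nonneg (l - b)]) (abs_nonneg b)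
    calc l = (l - b) + b := by ring
      _ ≤ |l - b| + |b| := add_le_add h2 h3
      _ ≤ (a ^ 2 + (l - b) ^ 2) / (2 * |a|) + |b| * (a ^ 2 + (l - b) ^ 2) / a ^ 2 :=
          add_le_add e1 e2
      _ = (1 / (2 * |a|) + |b| / a ^ 2) * (a ^ 2 + (l - b) ^ 2) := by ring
  rw [norm_div, div_pow, hden]
  have hl0 : (0:ℝ) ≤ l := le_trans zero_le_one hl
  have heq : l ^ 2 * (‖Complex.exp ((r - Complex.I * l) * T) - 1‖ ^ 2 / (a ^ 2 + (l - b) ^ 2))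
      = l ^ 2 * ‖Complex.exp ((r - Complex.I * l) * T) - 1‖ ^ 2 / (a ^ 2 + (l - b) ^ 2) := by
    ring
  rw [heq, div_le_iff₀ hdpos]
  calc l ^ 2 * ‖Complex.exp ((r - Complex.I * l) * T) - 1‖ ^ 2
      ≤ l ^ 2 * (Real.exp (a * T) + 1) ^ 2 :=
        mul_le_mul_of_nonneg_left hnum' (by positivity)
    _ = (Real.exp (a * T) + 1) ^ 2 * l * l := by ring
    _ ≤ (Real.exp (a * T) + 1) ^ 2 * l *
          ((1 / (2 * |a|) + |b| / a ^ 2) * (a ^ 2 + (l - b) ^ 2)) :=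
        mul_le_mul_of_nonneg_left hK (by positivity)
    _ = (Real.exp (a * T) + 1) ^ 2 * (1 / (2 * |a|) + |b| / a ^ 2) * l *
          (a ^ 2 + (l - b) ^ 2) := by ring

/-- forward continuity of the averaging operator `M₀ : H¹ → H²`.
With `ζ_k = (e^{(r - iλ_k)T} - 1)/(r - iλ_k)`, there is `ĉ > 0` depending only on `r`
and `T` such that for every eigenvalue sequence `λ_k ≥ 1` and every complex sequence
`(ξ_k)` with `Σ λ_k |ξ_k|² < ∞`, we have `Σ λ_k² |ζ_k ξ_k|² ≤ ĉ Σ λ_k |ξ_k|²`. -/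
theorem stmt_8 (T : ℝ) (hT : 0 < T) (r : ℂ) (hr : r.re ≠ 0) :
    ∃ c > 0, ∀ (lam : ℕ → ℝ), (∀ k, 1 ≤ lam k) →
      ∀ ξ : ℕ → ℂ, Summable (fun k => lam k * ‖ξ k‖ ^ 2) →
        Summable (fun k => (lam k) ^ 2 *
          ‖((Complex.exp ((r - Complex.I * lam k) * T) - 1) / (r - Complex.I * lam k)) * ξ k‖ ^ 2) ∧
        ∑' k, (lam k) ^ 2 *
            ‖((Complex.exp ((r - Complex.I * lam k) * T) - 1) / (r - Complex.I * lam k)) * ξ k‖ ^ 2 ≤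
          c * ∑' k, lam k * ‖ξ k‖ ^ 2 := by
  have ha : 0 < |r.re| := abs_pos.mpr hr
  set c : ℝ := (Real.exp (r.re * T) + 1) ^ 2 * (1 / (2 * |r.re|) + |r.im| / r.re ^ 2)
  have hc : 0 < c := by
    have h1 : (0:ℝ) < 1 / (2 * |r.re|) := by positivity
    have h2 : (0:ℝ) ≤ |r.im| / r.re ^ 2 := by positivity
    have hE : (0:ℝ) < (Real.exp (r.re * T) + 1) ^ 2 := by positivity
    exact mul_pos hE (by linarith)
  refine ⟨c, hc, fun lam hlam ξ hsum => ?_⟩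
  have hle : ∀ k, (lam k) ^ 2 *
      ‖((Complex.exp ((r - Complex.I * lam k) * T) - 1) / (r - Complex.I * lam k)) * ξ k‖ ^ 2 ≤
      c * (lam k * ‖ξ k‖ ^ 2) := by
    intro k
    have := stmt8_pointwise T r hr (lam k) (hlam k)
    rw [norm_mul, mul_pow]
    calc (lam k) ^ 2 * (‖(Complex.exp ((r - Complex.I * lam k) * T) - 1) / (r - Complex.I * lam k)‖ ^ 2 * ‖ξ k‖ ^ 2)
        = ((lam k) ^ 2 * ‖(Complex.exp ((r - Complex.I * lam k) * T) - 1) / (r - Complex.I * lam k)‖ ^ 2) * ‖ξ k‖ ^ 2 := by ring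
      _ ≤ (c * lam k) * ‖ξ k‖ ^ 2 := by
          exact mul_le_mul_of_nonneg_right this (by positivity)
      _ = c * (lam k * ‖ξ k‖ ^ 2) := by ring
  have hsum2 : Summable (fun k => c * (lam k * ‖ξ k‖ ^ 2)) := hsum.mul_left c
  have hS : Summable (fun k => (lam k) ^ 2 *
      ‖((Complex.exp ((r - Complex.I * lam k) * T) - 1) / (r - Complex.I * lam k)) * ξ k‖ ^ 2) := by
    apply Summable.of_nonneg_of_le (fun k => by positivity) hle hsum2
  refine ⟨hS, ?_⟩
  calc _ ≤ ∑' k, c * (lam k * ‖ξ k‖ ^ 2) := Summable.tsum_le_tsum hle hS hsum2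
    _ = c * ∑' k, lam k * ‖ξ k‖ ^ 2 := tsum_mul_left
end

section
/- Let λ : ℕ → ℝ satisfy λ_k ≥ 1 for all k, let T > 0, and let r ∈ ℂ with Re r ≠ 0. Let (γ_k)_{k∈ℕ} be a complex sequence with Σ_k λ_k² |γ_k|² < ∞, and define ξ_k := (r − i λ_k) γ_k / (e^{(r − i λ_k)T} − 1). Then Σ_k |ξ_k|² ≤ ((1 + |r|)² / |e^{(Re r)·T} − 1|²) · Σ_k λ_k² |γ_k|². In particular, for every μ in H² there is a (unique) initial state ξ ∈ H whose weighted time-average recovers μ, and the inverse map M₀⁻¹ : H² → H is continuous. -/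
/-- inverse continuity estimate of Lemma 2.  With
`ξ_k = (r - iλ_k) γ_k / (e^{(r - iλ_k)T} - 1)`, one has
`Σ |ξ_k|² ≤ ((1 + |r|)² / |e^{(Re r)T} - 1|²) Σ λ_k² |γ_k|²`. -/
theorem stmt_9 (lam : ℕ → ℝ) (hlam : ∀ k, 1 ≤ lam k) (T : ℝ) (hT : 0 < T)
    (r : ℂ) (hr : r.re ≠ 0) (γ : ℕ → ℂ)
    (hγ : Summable (fun k => (lam k) ^ 2 * ‖γ k‖ ^ 2)) :
    Summable (fun k =>
      ‖(r - Complex.I * lam k) * γ k / (Complex.exp ((r - Complex.I * lam k) * T) - 1)‖ ^ 2) ∧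
    ∑' k, ‖(r - Complex.I * lam k) * γ k /
        (Complex.exp ((r - Complex.I * lam k) * T) - 1)‖ ^ 2 ≤
      ((1 + ‖r‖) ^ 2 / |Real.exp (r.re * T) - 1| ^ 2) *
        ∑' k, (lam k) ^ 2 * ‖γ k‖ ^ 2 := by
  set C : ℝ := (1 + ‖r‖) ^ 2 / |Real.exp (r.re * T) - 1| ^ 2 with hC
  have hdpos : 0 < |Real.exp (r.re * T) - 1| := by
    rw [abs_pos, sub_ne_zero]
    intro h
    have h0 : Real.exp (r.re * T) = Real.exp 0 := by simpa using h
    have : r.re * T = 0 := Real.exp_eq_exp.mp h0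
    rcases mul_eq_zero.mp this with h' | h'
    · exact hr h'
    · exact hT.ne' h'
  have hden : ∀ k, |Real.exp (r.re * T) - 1| ≤
      ‖Complex.exp ((r - Complex.I * lam k) * T) - 1‖ := by
    intro k
    have h1 : ‖Complex.exp ((r - Complex.I * lam k) * T)‖ = Real.exp (r.re * T) := by
      rw [Complex.norm_exp]
      congr 1
      simp [Complex.mul_re, Complex.sub_re, Complex.sub_im, Complex.mul_im]
    calc |Real.exp (r.re * T) - 1|
        = |‖Complex.exp ((r - Complex.I * lam k) * T)‖ - ‖(1 : ℂ)‖| := by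
          rw [h1]; simp
      _ ≤ ‖Complex.exp ((r - Complex.I * lam k) * T) - 1‖ := abs_norm_sub_norm_le _ _
  have hnum : ∀ k, ‖r - Complex.I * lam k‖ ≤ (1 + ‖r‖) * lam k := by
    intro k
    have h1 : ‖r - Complex.I * lam k‖ ≤ ‖r‖ + ‖Complex.I * (lam k : ℂ)‖ := norm_sub_le _ _
    have h2 : ‖Complex.I * (lam k : ℂ)‖ = |lam k| := by
      simp [norm_mul]
    have h3 : |lam k| = lam k := abs_of_pos (lt_of_lt_of_le one_pos (hlam k))
    have h4 : (1 : ℝ) ≤ lam k := hlam k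
    have h5 : (0 : ℝ) ≤ ‖r‖ := norm_nonneg r
    have : ‖r‖ = ‖r‖ := rfl
    nlinarith [h1]
  have hterm : ∀ k,
      ‖(r - Complex.I * lam k) * γ k / (Complex.exp ((r - Complex.I * lam k) * T) - 1)‖ ^ 2 ≤
      C * ((lam k) ^ 2 * ‖γ k‖ ^ 2) := by
    intro k
    have hdk : 0 < ‖Complex.exp ((r - Complex.I * lam k) * T) - 1‖ :=
      lt_of_lt_of_le hdpos (hden k)
    rw [norm_div, norm_mul, div_pow, mul_pow]
    rw [hC, div_mul_eq_mul_div]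
    apply div_le_div₀ (by positivity)
    · have h1 : ‖r - Complex.I * lam k‖ ^ 2 ≤ ((1 + ‖r‖) * lam k) ^ 2 := by
        apply pow_le_pow_left₀ (norm_nonneg _) (hnum k)
      calc ‖r - Complex.I * lam k‖ ^ 2 * ‖γ k‖ ^ 2
          ≤ ((1 + ‖r‖) * lam k) ^ 2 * ‖γ k‖ ^ 2 := by
            apply mul_le_mul_of_nonneg_right h1 (by positivity)
        _ = (1 + ‖r‖) ^ 2 * ((lam k) ^ 2 * ‖γ k‖ ^ 2) := by ring
    · positivity
    · apply pow_le_pow_left₀ hdpos.le (hden k)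
  have hsum : Summable (fun k =>
      ‖(r - Complex.I * lam k) * γ k / (Complex.exp ((r - Complex.I * lam k) * T) - 1)‖ ^ 2) := by
    apply Summable.of_nonneg_of_le (fun k => by positivity) hterm (hγ.mul_left C)
  refine ⟨hsum, ?_⟩
  calc ∑' k, ‖(r - Complex.I * lam k) * γ k /
        (Complex.exp ((r - Complex.I * lam k) * T) - 1)‖ ^ 2
      ≤ ∑' k, C * ((lam k) ^ 2 * ‖γ k‖ ^ 2) := Summable.tsum_le_tsum hterm hsum (hγ.mul_left C)
    _ = C * ∑' k, (lam k) ^ 2 * ‖γ k‖ ^ 2 := tsum_mul_left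
end

section
/- Let H be a complex separable Hilbert space with Hilbert basis (v_k)_{k∈ℕ}, let λ : ℕ → ℝ satisfy λ_k ≥ 1 for all k, let T > 0, and let r ∈ ℂ with Re r ≠ 0. Let μ ∈ H with coefficients γ_k := ⟨v_k, μ⟩ satisfy Σ_k λ_k² |γ_k|² < ∞. Then for each t ∈ [0,T] the series u(t) := Σ_k ((r − i λ_k)/(e^{(r − i λ_k)T} − 1)) γ_k e^{−i λ_k t} v_k converges in H, the map t ↦ u(t) is continuous from [0,T] to H, and ∫₀ᵀ e^{r t} u(t) dt = μ (Bochner integral in H). -/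
open scoped ComplexConjugate ENNReal
open Filter

lemma norm_sq_sum_orthonormal {H : Type*} [NormedAddCommGroup H] [InnerProductSpace ℂ H]
    {v : ℕ → H} (hv : Orthonormal ℂ v) (f : ℕ → ℂ) (s : Finset ℕ) :
    ‖∑ k ∈ s, f k • v k‖ ^ 2 = ∑ k ∈ s, ‖f k‖ ^ 2 := by
  have h1 := hv.inner_sum f f s
  have h2 := inner_self_eq_norm_sq (𝕜 := ℂ) (∑ k ∈ s, f k • v k)
  rw [h1] at h2
  rw [← h2]
  rw [map_sum]
  refine Finset.sum_congr rfl fun k _ => ?_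
  simp [RCLike.conj_mul, RCLike.normSq_eq_def', ← Complex.ofReal_pow, Complex.ofReal_re]

lemma hasSum_norm_sq_of_hasSum {H : Type*} [NormedAddCommGroup H] [InnerProductSpace ℂ H]
    {v : ℕ → H} (hv : Orthonormal ℂ v) {f : ℕ → ℂ} {x : H}
    (h : HasSum (fun k => f k • v k) x) :
    HasSum (fun k => ‖f k‖ ^ 2) (‖x‖ ^ 2) := by
  have h2 : Filter.Tendsto (fun s : Finset ℕ => ‖∑ k ∈ s, f k • v k‖ ^ 2)
      Filter.atTop (nhds (‖x‖ ^ 2)) := (h.norm.pow 2)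
  have h3 : Filter.Tendsto (fun s : Finset ℕ => ∑ k ∈ s, ‖f k‖ ^ 2) Filter.atTop (nhds (‖x‖ ^ 2)) := by
    simpa only [norm_sq_sum_orthonormal hv f] using h2
  exact h3

noncomputable def cfun (r : ℂ) (lam : ℕ → ℝ) (T : ℝ) (g : ℕ → ℂ) (k : ℕ) (t : ℝ) : ℂ :=
  ((r - Complex.I * lam k) / (Complex.exp ((r - Complex.I * lam k) * T) - 1)) * g k *
    Complex.exp (-(Complex.I * lam k * t))

section facts
variable {r : ℂ} {T : ℝ}

lemma sub_I_re (x : ℝ) : (r - Complex.I * x).re = r.re := by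
  simp [Complex.sub_re, Complex.mul_re]

lemma sub_I_ne (hr : r.re ≠ 0) (x : ℝ) : r - Complex.I * x ≠ 0 := by
  intro h
  apply hr
  have := sub_I_re (r := r) x
  rw [h] at this
  simpa using this.symm

lemma rT_ne (hr : r.re ≠ 0) (hT : 0 < T) : r.re * T ≠ 0 := mul_ne_zero hr hT.ne'

lemma norm_exp_aT (x : ℝ) : ‖Complex.exp ((r - Complex.I * x) * T)‖ = Real.exp (r.re * T) := by
  rw [Complex.norm_exp, Complex.mul_re]
  simp [sub_I_re]

lemma E_pos (hr : r.re ≠ 0) (hT : 0 < T) : 0 < |Real.exp (r.re * T) - 1| :=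
  abs_pos.2 (sub_ne_zero.2 fun h => rT_ne hr hT ((Real.exp_eq_one_iff _).mp h))

lemma den_ne (hr : r.re ≠ 0) (hT : 0 < T) (x : ℝ) : Complex.exp ((r - Complex.I * x) * T) - 1 ≠ 0 := by
  intro h
  rw [sub_eq_zero] at h
  have h2 := norm_exp_aT (r := r) (T := T) x
  rw [h] at h2
  simp only [norm_one] at h2
  exact rT_ne hr hT ((Real.exp_eq_one_iff _).mp h2.symm)

lemma E_le_den (x : ℝ) :
    |Real.exp (r.re * T) - 1| ≤ ‖Complex.exp ((r - Complex.I * x) * T) - 1‖ := by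
  calc |Real.exp (r.re * T) - 1|
      = |‖Complex.exp ((r - Complex.I * x) * T)‖ - ‖(1 : ℂ)‖| := by rw [norm_exp_aT]; simp
    _ ≤ ‖Complex.exp ((r - Complex.I * x) * T) - 1‖ := abs_norm_sub_norm_le _ _

lemma norm_exp_unit (x t : ℝ) : ‖Complex.exp (-(Complex.I * x * t))‖ = 1 := by
  rw [Complex.norm_exp]
  simp [Complex.mul_re, Complex.mul_im]

lemma cfun_bound (hr : r.re ≠ 0) (hT : 0 < T) {lam : ℕ → ℝ} (hlam : ∀ k, 1 ≤ lam k) (g : ℕ → ℂ) (k : ℕ) (t : ℝ) :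
    ‖cfun r lam T g k t‖ ≤
      ((‖r‖ + 1) / |Real.exp (r.re * T) - 1|) * (lam k * ‖g k‖) := by
  have hE := E_pos (r := r) (T := T) hr hT
  rw [cfun, norm_mul, norm_mul, norm_div, norm_exp_unit, mul_one]
  have h1 : ‖r - Complex.I * lam k‖ ≤ (‖r‖ + 1) * lam k := by
    have : ‖r - Complex.I * lam k‖ ≤ ‖r‖ + lam k := by
      calc ‖r - Complex.I * lam k‖ ≤ ‖r‖ + ‖Complex.I * (lam k : ℂ)‖ := norm_sub_le _ _
        _ = ‖r‖ + |lam k| := by simp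
        _ = ‖r‖ + lam k := by rw [abs_of_pos (lt_of_lt_of_le one_pos (hlam k))]
    nlinarith [hlam k, norm_nonneg r]
  have h2 : ‖r - Complex.I * lam k‖ / ‖Complex.exp ((r - Complex.I * lam k) * T) - 1‖
      ≤ ((‖r‖ + 1) * lam k) / |Real.exp (r.re * T) - 1| := by
    have hnn : (0:ℝ) ≤ (‖r‖ + 1) * lam k := by nlinarith [hlam k, norm_nonneg r]
    exact div_le_div₀ hnn h1 hE (E_le_den _)
  calc ‖r - Complex.I * lam k‖ / ‖Complex.exp ((r - Complex.I * lam k) * T) - 1‖ * ‖g k‖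
      ≤ ((‖r‖ + 1) * lam k) / |Real.exp (r.re * T) - 1| * ‖g k‖ :=
        mul_le_mul_of_nonneg_right h2 (norm_nonneg _)
    _ = (‖r‖ + 1) / |Real.exp (r.re * T) - 1| * (lam k * ‖g k‖) := by ring

lemma cfun_continuous {lam : ℕ → ℝ} (g : ℕ → ℂ) (k : ℕ) :
    Continuous (fun t => cfun r lam T g k t) := by
  unfold cfun
  fun_prop

lemma cfun_integral (hr : r.re ≠ 0) (hT : 0 < T) {lam : ℕ → ℝ} (g : ℕ → ℂ) (k : ℕ) :
    (∫ t in (0:ℝ)..T, Complex.exp (r * t) * cfun r lam T g k t) = g k := by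
  have hA : (r - Complex.I * lam k) ≠ 0 := sub_I_ne hr _
  have hden := den_ne (r := r) (T := T) hr hT (lam k)
  have key : ∀ t : ℝ, Complex.exp (r * t) * cfun r lam T g k t =
      ((r - Complex.I * lam k) / (Complex.exp ((r - Complex.I * lam k) * T) - 1)) * g k *
        Complex.exp ((r - Complex.I * lam k) * t) := by
    intro t
    rw [cfun, ← mul_assoc]
    rw [mul_comm (Complex.exp (r * t)), mul_assoc, ← Complex.exp_add]
    ring_nf
  simp_rw [key]
  rw [intervalIntegral.integral_const_mul, integral_exp_mul_complex hA]
  push_cast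
  rw [mul_zero, Complex.exp_zero]
  field_simp

end facts


/-- Remark 1, explicit solution formula.  For `μ` with
`Σ_k λ_k² |γ_k|² < ∞` (`γ_k = ⟨v_k, μ⟩`), the series
`u(t) = Σ_k ((r - iλ_k)/(e^{(r - iλ_k)T} - 1)) γ_k e^{-iλ_k t} v_k` converges in `H`
for each `t ∈ [0,T]`, `u` is continuous on `[0,T]`, and `∫₀ᵀ e^{rt} u(t) dt = μ`. -/
theorem stmt_10 {H : Type*} [NormedAddCommGroup H] [InnerProductSpace ℂ H] [CompleteSpace H]
    (b : HilbertBasis ℕ ℂ H) (lam : ℕ → ℝ) (hlam : ∀ k, 1 ≤ lam k)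
    (T : ℝ) (hT : 0 < T) (r : ℂ) (hr : r.re ≠ 0) (μ : H)
    (hμ : Summable (fun k => lam k ^ 2 * ‖b.repr μ k‖ ^ 2)) :
    ∃ u : ℝ → H,
      (∀ t ∈ Set.Icc (0:ℝ) T, HasSum (fun k =>
        (((r - Complex.I * lam k) / (Complex.exp ((r - Complex.I * lam k) * T) - 1)) *
          b.repr μ k * Complex.exp (-(Complex.I * lam k * t))) • b k) (u t)) ∧
      ContinuousOn u (Set.Icc 0 T) ∧
      (∫ t in (0:ℝ)..T, Complex.exp (r * t) • u t) = μ := by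
  classical
  have horm := b.orthonormal
  set g : ℕ → ℂ := fun k => b.repr μ k with hg
  set C : ℝ := (‖r‖ + 1) / |Real.exp (r.re * T) - 1| with hC
  have hEpos : (0:ℝ) < |Real.exp (r.re * T) - 1| := E_pos hr hT
  have hCpos : 0 ≤ C := by rw [hC]; positivity
  have hbd : ∀ (k : ℕ) (t : ℝ), ‖cfun r lam T g k t‖ ≤ C * (lam k * ‖g k‖) := fun k t =>
    cfun_bound hr hT hlam g k t
  have hsq_le : ∀ (k : ℕ) (t : ℝ), ‖cfun r lam T g k t‖ ^ 2
      ≤ C ^ 2 * (lam k ^ 2 * ‖b.repr μ k‖ ^ 2) := by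
    intro k t
    have h1 := hbd k t
    have h2 : (0:ℝ) ≤ ‖cfun r lam T g k t‖ := norm_nonneg _
    have h3 : (0:ℝ) ≤ C * (lam k * ‖g k‖) := h2.trans h1
    have h4 : ‖cfun r lam T g k t‖ ^ 2 ≤ (C * (lam k * ‖g k‖)) ^ 2 := by nlinarith
    calc ‖cfun r lam T g k t‖ ^ 2 ≤ (C * (lam k * ‖g k‖)) ^ 2 := h4
      _ = C ^ 2 * (lam k ^ 2 * ‖b.repr μ k‖ ^ 2) := by rw [hg]; ring
  have hCw : Summable (fun k => C ^ 2 * (lam k ^ 2 * ‖b.repr μ k‖ ^ 2)) := hμ.mul_left _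
  have hsum_sq : ∀ t : ℝ, Summable (fun k => ‖cfun r lam T g k t‖ ^ 2) := fun t =>
    Summable.of_nonneg_of_le (fun k => by positivity) (fun k => hsq_le k t) hCw
  have hmem : ∀ t : ℝ, Memℓp (fun k => cfun r lam T g k t) 2 := by
    intro t
    apply memℓp_gen
    have h2 : ((2:ℝ≥0∞)).toReal = ((2:ℕ):ℝ) := by norm_num
    rw [h2]
    simpa [Real.rpow_natCast] using hsum_sq t
  set u : ℝ → H := fun t => b.repr.symm ⟨fun k => cfun r lam T g k t, hmem t⟩ with hu
  have hHasSum : ∀ t : ℝ, HasSum (fun k => cfun r lam T g k t • b k) (u t) := fun t =>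
    b.hasSum_repr_symm ⟨fun k => cfun r lam T g k t, hmem t⟩
  set S : ℕ → ℝ → H := fun n t => ∑ k ∈ Finset.range n, cfun r lam T g k t • b k with hS
  -- tail estimate
  have htail : ∀ (n : ℕ) (t : ℝ), ‖u t - S n t‖ ^ 2 ≤
      (∑' k, C ^ 2 * (lam k ^ 2 * ‖b.repr μ k‖ ^ 2))
        - ∑ k ∈ Finset.range n, C ^ 2 * (lam k ^ 2 * ‖b.repr μ k‖ ^ 2) := by
    intro n t
    have hfin : HasSum (fun k => (if k ∈ Finset.range n then cfun r lam T g k t else 0) • b k)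
        (S n t) := by
      have h1 : ∀ k ∉ Finset.range n,
          (if k ∈ Finset.range n then cfun r lam T g k t else 0) • b k = 0 := by
        intro k hk; rw [if_neg hk, zero_smul]
      have h2 := hasSum_sum_of_ne_finset_zero (L := SummationFilter.unconditional ℕ) h1
      have h3 : ∑ k ∈ Finset.range n,
          (if k ∈ Finset.range n then cfun r lam T g k t else 0) • b k = S n t := by
        rw [hS]
        exact Finset.sum_congr rfl fun k hk => by rw [if_pos hk]
      rwa [h3] at h2
    have hdiff : HasSum (fun k => (if k ∈ Finset.range n then 0 else cfun r lam T g k t) • b k)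
        (u t - S n t) := by
      have hfe : (fun k => (if k ∈ Finset.range n then 0 else cfun r lam T g k t) • b k)
          = fun k => cfun r lam T g k t • b k
              - (if k ∈ Finset.range n then cfun r lam T g k t else 0) • b k := by
        funext k; by_cases hk : k ∈ Finset.range n <;> simp [hk]
      rw [hfe]; exact (hHasSum t).sub hfin
    have hns := hasSum_norm_sq_of_hasSum horm hdiff
    have hboundhas : HasSum
        (fun k => if k ∈ Finset.range n then 0 else C ^ 2 * (lam k ^ 2 * ‖b.repr μ k‖ ^ 2))
        ((∑' k, C ^ 2 * (lam k ^ 2 * ‖b.repr μ k‖ ^ 2))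
          - ∑ k ∈ Finset.range n, C ^ 2 * (lam k ^ 2 * ‖b.repr μ k‖ ^ 2)) := by
      have h1 : ∀ k ∉ Finset.range n,
          (if k ∈ Finset.range n then C ^ 2 * (lam k ^ 2 * ‖b.repr μ k‖ ^ 2) else 0) = 0 :=
        fun k hk => if_neg hk
      have h2 := hasSum_sum_of_ne_finset_zero (L := SummationFilter.unconditional ℕ) h1
      have h3 : ∑ k ∈ Finset.range n,
          (if k ∈ Finset.range n then C ^ 2 * (lam k ^ 2 * ‖b.repr μ k‖ ^ 2) else 0)
          = ∑ k ∈ Finset.range n, C ^ 2 * (lam k ^ 2 * ‖b.repr μ k‖ ^ 2) :=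
        Finset.sum_congr rfl fun k hk => if_pos hk
      rw [h3] at h2
      have hfe : (fun k => if k ∈ Finset.range n then 0 else C ^ 2 * (lam k ^ 2 * ‖b.repr μ k‖ ^ 2))
          = fun k => C ^ 2 * (lam k ^ 2 * ‖b.repr μ k‖ ^ 2)
              - (if k ∈ Finset.range n then C ^ 2 * (lam k ^ 2 * ‖b.repr μ k‖ ^ 2) else 0) := by
        funext k; by_cases hk : k ∈ Finset.range n <;> simp [hk]
      rw [hfe]; exact hCw.hasSum.sub h2
    refine hasSum_le (fun k => ?_) hns hboundhas
    by_cases hk : k ∈ Finset.range n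
    · simp [hk]
    · simpa [hk] using hsq_le k t
  -- uniform convergence
  have htend0 : Filter.Tendsto (fun n =>
      (∑' k, C ^ 2 * (lam k ^ 2 * ‖b.repr μ k‖ ^ 2))
        - ∑ k ∈ Finset.range n, C ^ 2 * (lam k ^ 2 * ‖b.repr μ k‖ ^ 2)) atTop (nhds 0) := by
    have h1 := hCw.hasSum.tendsto_sum_nat
    have h2 := h1.const_sub (∑' k, C ^ 2 * (lam k ^ 2 * ‖b.repr μ k‖ ^ 2))
    simpa using h2
  have hTU : TendstoUniformlyOn S u atTop (Set.Icc 0 T) := by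
    rw [Metric.tendstoUniformlyOn_iff]
    intro ε hε
    have hev : ∀ᶠ n in atTop,
        (∑' k, C ^ 2 * (lam k ^ 2 * ‖b.repr μ k‖ ^ 2))
          - ∑ k ∈ Finset.range n, C ^ 2 * (lam k ^ 2 * ‖b.repr μ k‖ ^ 2) < ε ^ 2 :=
      htend0.eventually_lt_const (by positivity)
    filter_upwards [hev] with n hn t _
    rw [dist_eq_norm]
    have h1 := htail n t
    nlinarith [norm_nonneg (u t - S n t)]
  have hScont : ∀ n, Continuous (S n) := by
    intro n
    rw [hS]
    exact continuous_finset_sum _ fun k _ => (cfun_continuous g k).smul continuous_const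
  have hucont : ContinuousOn u (Set.Icc 0 T) :=
    hTU.continuousOn (Filter.Eventually.of_forall fun n => (hScont n).continuousOn).frequently
  -- integral
  have hSnorm2 : ∀ (n : ℕ) (t : ℝ), ‖S n t‖ ^ 2 ≤ ∑' k, C ^ 2 * (lam k ^ 2 * ‖b.repr μ k‖ ^ 2) := by
    intro n t
    have h0 : ‖S n t‖ ^ 2 = ∑ k ∈ Finset.range n, ‖cfun r lam T g k t‖ ^ 2 := by
      rw [hS]; exact norm_sq_sum_orthonormal horm _ _
    rw [h0]
    calc ∑ k ∈ Finset.range n, ‖cfun r lam T g k t‖ ^ 2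
        ≤ ∑ k ∈ Finset.range n, C ^ 2 * (lam k ^ 2 * ‖b.repr μ k‖ ^ 2) :=
          Finset.sum_le_sum fun k _ => hsq_le k t
      _ ≤ ∑' k, C ^ 2 * (lam k ^ 2 * ‖b.repr μ k‖ ^ 2) :=
          Summable.sum_le_tsum _ (fun k _ => by positivity) hCw
  have hW0 : (0:ℝ) ≤ ∑' k, C ^ 2 * (lam k ^ 2 * ‖b.repr μ k‖ ^ 2) :=
    tsum_nonneg fun k => by positivity
  have hSnormB : ∀ (n : ℕ) (t : ℝ),
      ‖S n t‖ ≤ Real.sqrt (∑' k, C ^ 2 * (lam k ^ 2 * ‖b.repr μ k‖ ^ 2)) := by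
    intro n t
    have h1 := hSnorm2 n t
    nlinarith [Real.sq_sqrt hW0, Real.sqrt_nonneg (∑' k, C ^ 2 * (lam k ^ 2 * ‖b.repr μ k‖ ^ 2)),
      norm_nonneg (S n t)]
  have hbound : ∀ (n : ℕ), ∀ t ∈ Set.uIoc (0:ℝ) T, ‖Complex.exp (r * t) • S n t‖ ≤
      Real.exp (|r.re| * T) * Real.sqrt (∑' k, C ^ 2 * (lam k ^ 2 * ‖b.repr μ k‖ ^ 2)) := by
    intro n t ht
    rw [Set.uIoc_of_le hT.le] at ht
    have ht0 : 0 ≤ t := ht.1.le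
    have htT : t ≤ T := ht.2
    rw [norm_smul]
    have h1 : ‖Complex.exp (r * t)‖ = Real.exp (r.re * t) := by
      rw [Complex.norm_exp, Complex.mul_re]
      simp
    have h2 : r.re * t ≤ |r.re| * T := by
      calc r.re * t ≤ |r.re| * t := mul_le_mul_of_nonneg_right (le_abs_self _) ht0
        _ ≤ |r.re| * T := mul_le_mul_of_nonneg_left htT (abs_nonneg _)
    rw [h1]
    exact mul_le_mul (Real.exp_le_exp.2 h2) (hSnormB n t) (norm_nonneg _) (Real.exp_pos _).le
  have hglim : ∀ t : ℝ, Filter.Tendsto (fun n => Complex.exp (r * t) • S n t) atTop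
      (nhds (Complex.exp (r * t) • u t)) := by
    intro t
    have := (hHasSum t).tendsto_sum_nat
    exact this.const_smul _
  have hgcont : ∀ n, Continuous (fun t : ℝ => Complex.exp (r * t) • S n t) := by
    intro n
    have h1 : Continuous (fun t : ℝ => Complex.exp (r * t)) := by fun_prop
    exact h1.smul (hScont n)
  have hInt : Filter.Tendsto (fun n => ∫ t in (0:ℝ)..T, Complex.exp (r * t) • S n t) atTop
      (nhds (∫ t in (0:ℝ)..T, Complex.exp (r * t) • u t)) := by
    apply intervalIntegral.tendsto_integral_filter_of_dominated_convergence
      (bound := fun _ => Real.exp (|r.re| * T) *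
        Real.sqrt (∑' k, C ^ 2 * (lam k ^ 2 * ‖b.repr μ k‖ ^ 2)))
    · exact Filter.Eventually.of_forall fun n => (hgcont n).aestronglyMeasurable
    · exact Filter.Eventually.of_forall fun n => MeasureTheory.ae_of_all _ fun t ht =>
        hbound n t ht
    · exact intervalIntegrable_const
    · exact MeasureTheory.ae_of_all _ fun t _ => hglim t
  have hIntS : ∀ n : ℕ, (∫ t in (0:ℝ)..T, Complex.exp (r * t) • S n t)
      = ∑ k ∈ Finset.range n, g k • b k := by
    intro n
    have h1 : ∀ t : ℝ, Complex.exp (r * t) • S n t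
        = ∑ k ∈ Finset.range n, (Complex.exp (r * t) * cfun r lam T g k t) • b k := by
      intro t
      rw [hS, Finset.smul_sum]
      exact Finset.sum_congr rfl fun k _ => (smul_smul _ _ _)
    simp_rw [h1]
    rw [intervalIntegral.integral_finset_sum]
    · exact Finset.sum_congr rfl fun k _ => by
        rw [intervalIntegral.integral_smul_const, cfun_integral hr hT g k]
    · intro k _
      apply Continuous.intervalIntegrable
      have h2 : Continuous (fun t : ℝ => Complex.exp (r * t)) := by fun_prop
      exact (h2.mul (cfun_continuous g k)).smul continuous_const
  have hμlim : Filter.Tendsto (fun n => ∑ k ∈ Finset.range n, g k • b k) atTop (nhds μ) :=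
    (b.hasSum_repr μ).tendsto_sum_nat
  have hfinal : (∫ t in (0:ℝ)..T, Complex.exp (r * t) • u t) = μ := by
    refine tendsto_nhds_unique ?_ hμlim
    have := hInt
    simp_rw [hIntS] at this
    exact this
  exact ⟨u, fun t _ => hHasSum t, hucont, hfinal⟩
end

section
/- Let H be a complex separable Hilbert space with Hilbert basis (v_k)_{k∈ℕ}, let λ : ℕ → ℝ, and let ξ ∈ H with coefficients ξ_k := ⟨v_k, ξ⟩ satisfy Σ_k λ_k² |ξ_k|² < ∞. Define u(t) := Σ_k e^{−i λ_k t} ξ_k v_k and w(s) := Σ_k λ_k e^{−i λ_k s} ξ_k v_k (both series converging in H). Then for every t ≥ 0, u(t) = ξ − i ∫₀ᵗ w(s) ds (Bochner integral in H); that is, u solves the Schrödinger equation (1/i) du/dt = A u with u(0) = ξ, where A is the diagonal operator A v_k = −λ_k v_k. -/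
open MeasureTheory

/-- Coefficient of a Hilbert-basis expansion. -/
lemma coef_of_hasSum {H : Type*} [NormedAddCommGroup H] [InnerProductSpace ℂ H] [CompleteSpace H]
    (b : HilbertBasis ℕ ℂ H) (a : ℕ → ℂ) (x : H) (h : HasSum (fun j => a j • b j) x) (k : ℕ) :
    b.repr x k = a k := by
  rw [b.repr_apply_apply]
  have h2 := (innerSL ℂ (b k)).hasSum h
  have h3 : HasSum (fun j => if j = k then a k else 0) ((innerSL ℂ (b k)) x) := by
    refine h2.congr_fun fun j => ?_
    have horth := orthonormal_iff_ite.mp b.orthonormal k j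
    by_cases hjk : j = k
    · subst hjk
      simp [inner_smul_right, horth, b.orthonormal.1 j]
    · simp only [innerSL_apply_apply, inner_smul_right, horth, if_neg (Ne.symm hjk), if_neg hjk,
        mul_zero]
  have := ((hasSum_ite_eq k (a k)).unique h3).symm
  simpa using this

/-- for `ξ ∈ H²` (i.e. `Σ_k λ_k² |ξ_k|² < ∞`), the eigenfunction expansion
`u(t) = Σ_k e^{-iλ_k t} ξ_k v_k` is an `H`-valued integral-form solution of the
Schrödinger equation: `u(t) = ξ - i ∫₀ᵗ w(s) ds` with `w(s) = Σ_k λ_k e^{-iλ_k s} ξ_k v_k`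
(so that `w(s) = -A u(s)` for the diagonal operator `A v_k = -λ_k v_k`). -/
theorem stmt_11 {H : Type*} [NormedAddCommGroup H] [InnerProductSpace ℂ H] [CompleteSpace H]
    (b : HilbertBasis ℕ ℂ H) (lam : ℕ → ℝ) (ξ : H)
    (hξ : Summable (fun k => lam k ^ 2 * ‖b.repr ξ k‖ ^ 2))
    (u w : ℝ → H)
    (hu : ∀ t : ℝ,
      HasSum (fun k => (Complex.exp (-(Complex.I * lam k * t)) * b.repr ξ k) • b k) (u t))
    (hw : ∀ s : ℝ,
      HasSum (fun k =>
        ((lam k : ℂ) * Complex.exp (-(Complex.I * lam k * s)) * b.repr ξ k) • b k) (w s)) :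
    ∀ t : ℝ, 0 ≤ t → u t = ξ - Complex.I • ∫ s in (0:ℝ)..t, w s := by
  intro t ht
  -- norm of each coefficient of w
  have hnorm : ∀ (s : ℝ) (k : ℕ),
      ‖(lam k : ℂ) * Complex.exp (-(Complex.I * lam k * s)) * b.repr ξ k‖ ^ 2
        = lam k ^ 2 * ‖b.repr ξ k‖ ^ 2 := by
    intro s k
    have hexp : ‖Complex.exp (-(Complex.I * lam k * s))‖ = 1 := by
      rw [Complex.norm_exp]
      norm_num
    rw [norm_mul, norm_mul, hexp, Complex.norm_real]
    rw [Real.norm_eq_abs]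
    ring_nf
    rw [sq_abs]
    ring
  -- uniform bound on ‖w s‖
  set C : ℝ := Real.sqrt (∑' k, lam k ^ 2 * ‖b.repr ξ k‖ ^ 2) with hC
  have hbound : ∀ s : ℝ, ‖w s‖ ≤ C := by
    intro s
    have h1 : ‖w s‖ = ‖b.repr (w s)‖ := (b.repr.norm_map (w s)).symm
    have h2 : ‖b.repr (w s)‖ ^ (2 : ℝ) = ∑' k, ‖b.repr (w s) k‖ ^ (2 : ℝ) := by
      have := lp.norm_rpow_eq_tsum (p := 2) (by norm_num) (b.repr (w s))
      simpa using this
    have h3 : ∀ k, b.repr (w s) k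
        = (lam k : ℂ) * Complex.exp (-(Complex.I * lam k * s)) * b.repr ξ k :=
      coef_of_hasSum b _ _ (hw s)
    have h4 : ‖w s‖ ^ 2 = ∑' k, lam k ^ 2 * ‖b.repr ξ k‖ ^ 2 := by
      rw [h1, ← Real.rpow_natCast (‖b.repr (w s)‖) 2]
      push_cast
      rw [h2]
      congr 1
      funext k
      rw [h3 k, ← hnorm s k, ← Real.rpow_natCast _ 2]
      norm_num
    rw [hC]
    have : ‖w s‖ = Real.sqrt (‖w s‖ ^ 2) := by
      rw [Real.sqrt_sq (norm_nonneg _)]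
    rw [this, h4]
  -- strong measurability of w
  have hmeas : StronglyMeasurable w := by
    refine stronglyMeasurable_of_tendsto (f := fun n (s : ℝ) => ∑ k ∈ Finset.range n,
      ((lam k : ℂ) * Complex.exp (-(Complex.I * lam k * s)) * b.repr ξ k) • b k)
      (g := w) Filter.atTop (fun n => ?_) ?_
    · refine Continuous.stronglyMeasurable ?_
      refine continuous_finset_sum _ fun k _ => ?_
      fun_prop
    · rw [tendsto_pi_nhds]
      intro s
      exact (hw s).tendsto_sum_nat
  -- interval integrability of w
  have hInt : IntervalIntegrable w volume 0 t := by
    rw [intervalIntegrable_iff, Set.uIoc_of_le ht]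
    refine Integrable.mono' (integrableOn_const (C := C) measure_Ioc_lt_top.ne)
      hmeas.aestronglyMeasurable.restrict ?_
    exact Filter.Eventually.of_forall fun s => hbound s
  -- compare coefficients
  refine b.repr.injective (lp.ext (funext fun k => ?_))
  have hukey : b.repr (u t) k = Complex.exp (-(Complex.I * lam k * t)) * b.repr ξ k :=
    coef_of_hasSum b _ _ (hu t) k
  have hwkey : ∀ s : ℝ, b.repr (w s) k
      = (lam k : ℂ) * Complex.exp (-(Complex.I * lam k * s)) * b.repr ξ k :=
    fun s => coef_of_hasSum b _ _ (hw s) k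
  rw [hukey]
  rw [map_sub, b.repr.map_smul]
  simp only [lp.coeFn_sub, lp.coeFn_smul, Pi.sub_apply, Pi.smul_apply, smul_eq_mul]
  -- coefficient of the integral
  have hint_coef : b.repr (∫ s in (0:ℝ)..t, w s) k
      = ∫ s in (0:ℝ)..t, (lam k : ℂ) * Complex.exp (-(Complex.I * lam k * s)) * b.repr ξ k := by
    have h5 : b.repr (∫ s in (0:ℝ)..t, w s) k = (inner ℂ (b k) (∫ s in (0:ℝ)..t, w s) : ℂ) :=
      b.repr_apply_apply _ k
    have h6 : (∫ s in (0:ℝ)..t, (innerSL ℂ (b k)) (w s))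
        = (innerSL ℂ (b k)) (∫ s in (0:ℝ)..t, w s) :=
      (innerSL ℂ (b k)).intervalIntegral_comp_comm hInt
    rw [innerSL_apply_apply] at h6
    rw [h5, ← h6]
    refine intervalIntegral.integral_congr fun s _ => ?_
    rw [innerSL_apply_apply, ← b.repr_apply_apply, hwkey s]
  rw [hint_coef]
  -- compute the integral explicitly
  have harg : ∀ s : ℝ, -(Complex.I * lam k * s) = (-(Complex.I * lam k)) * s := fun s => by ring
  by_cases hlk : (lam k : ℂ) = 0
  · simp [hlk]
  · have hc : (-(Complex.I * lam k)) ≠ 0 := by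
      simp [Complex.I_ne_zero, hlk]
    have hint : (∫ s in (0:ℝ)..t,
        (lam k : ℂ) * Complex.exp (-(Complex.I * lam k * s)) * b.repr ξ k)
        = (lam k : ℂ) * b.repr ξ k *
          ((Complex.exp ((-(Complex.I * lam k)) * t) - 1) / (-(Complex.I * lam k))) := by
      simp only [harg]
      have : (fun s : ℝ => (lam k : ℂ) * Complex.exp ((-(Complex.I * lam k)) * s) * b.repr ξ k)
          = fun s : ℝ => ((lam k : ℂ) * b.repr ξ k) * Complex.exp ((-(Complex.I * lam k)) * s) :=
        funext fun s => by ring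
      rw [this, intervalIntegral.integral_const_mul, integral_exp_mul_complex hc]
      rw [mul_comm ((lam k : ℂ)) _, show ((0:ℝ):ℂ) = 0 from rfl, mul_zero, Complex.exp_zero]
    rw [hint, harg t]
    field_simp
    ring
end
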